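/- Let G be a g-chromatic edge-colored graph of order n with more than C(n−w, 2) edges, and let 1 ≤ w ≤ n−1. If g(c) ≤ (|E(G)| / (n − w)) · f(c) for every color c, then G has an f-chromatic spanning forest with exactly w components. -/

import Mathlib

set_option linter.unusedSectionVars false
open Finset

namespace FCF

variable {V : Type*} {C : Type*} [DecidableEq V]

/-- one-step relation: `u,v` joined by an edge of `S`. -/
def crel (S : Finset (Sym2 V)) (u v : V) : Prop := s(u, v) ∈ S

/-- connectivity via edges of `S`. -/
def creach (S : Finset (Sym2 V)) : V → V → Prop := Relation.ReflTransGen (crel S)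

lemma crel_symm (S : Finset (Sym2 V)) : Symmetric (crel S) := by
  intro u v h
  unfold crel at *
  rwa [Sym2.eq_swap]

lemma creach_refl (S : Finset (Sym2 V)) (v : V) : creach S v v := Relation.ReflTransGen.refl

lemma creach_symm {S : Finset (Sym2 V)} {u v : V} (h : creach S u v) : creach S v u :=
  @(@Relation.ReflTransGen.stdSymm _ (crel S) ⟨crel_symm S⟩).symm _ _ h

lemma creach_trans {S : Finset (Sym2 V)} {u v w : V} (h : creach S u v) (h' : creach S v w) :
    creach S u w := Relation.ReflTransGen.trans h h'

lemma creach_single {S : Finset (Sym2 V)} {u v : V} (h : s(u,v) ∈ S) : creach S u v :=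
  Relation.ReflTransGen.single h

lemma creach_mono {S T : Finset (Sym2 V)} (h : S ⊆ T) {u v : V} (hr : creach S u v) :
    creach T u v := Relation.ReflTransGen.mono (fun _ _ hx => h hx) _ _ hr

/-- the setoid of connectivity classes. -/
def csetoid (S : Finset (Sym2 V)) : Setoid V :=
  ⟨creach S, ⟨creach_refl S, creach_symm, creach_trans⟩⟩

/-- number of connected "components" (classes of `csetoid`). -/
noncomputable def ncomp [Fintype V] (S : Finset (Sym2 V)) : ℕ :=
  Nat.card (Quotient (csetoid S))

lemma creach_insert_iff {S : Finset (Sym2 V)} {x y u v : V} :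
    creach (insert s(x,y) S) u v ↔
      creach S u v ∨ (creach S u x ∧ creach S y v) ∨ (creach S u y ∧ creach S x v) := by
  constructor
  · intro h
    induction h with
    | refl => exact Or.inl (creach_refl S u)
    | @tail b c hub hbc ih =>
      rcases Finset.mem_insert.mp hbc with hbc | hbc
      · rcases Sym2.eq_iff.mp hbc with ⟨rfl, rfl⟩ | ⟨rfl, rfl⟩
        · -- b = x, c = y
          rcases ih with h1 | ⟨h1, h2⟩ | ⟨h1, h2⟩
          · exact Or.inr (Or.inl ⟨h1, creach_refl S _⟩)
          · exact Or.inr (Or.inl ⟨h1, creach_refl S _⟩)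
          · exact Or.inl h1
        · -- b = y, c = x
          rcases ih with h1 | ⟨h1, h2⟩ | ⟨h1, h2⟩
          · exact Or.inr (Or.inr ⟨h1, creach_refl S _⟩)
          · exact Or.inl h1
          · exact Or.inr (Or.inr ⟨h1, creach_refl S _⟩)
      · have hbc' : creach S b c := creach_single hbc
        rcases ih with h1 | ⟨h1, h2⟩ | ⟨h1, h2⟩
        · exact Or.inl (creach_trans h1 hbc')
        · exact Or.inr (Or.inl ⟨h1, creach_trans h2 hbc'⟩)
        · exact Or.inr (Or.inr ⟨h1, creach_trans h2 hbc'⟩)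
  · intro h
    have hsub : S ⊆ insert s(x,y) S := Finset.subset_insert _ _
    have hxy : creach (insert s(x,y) S) x y :=
      creach_single (Finset.mem_insert_self _ _)
    rcases h with h1 | ⟨h1, h2⟩ | ⟨h1, h2⟩
    · exact creach_mono hsub h1
    · exact creach_trans (creach_mono hsub h1) (creach_trans hxy (creach_mono hsub h2))
    · exact creach_trans (creach_mono hsub h1)
        (creach_trans (creach_symm hxy) (creach_mono hsub h2))


lemma ncomp_insert_of_reach [Fintype V] {S : Finset (Sym2 V)} {x y : V}
    (h : creach S x y) : ncomp (insert s(x,y) S) = ncomp S := by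
  apply Nat.card_congr
  apply Quotient.congrRight
  intro a b
  show creach _ a b ↔ creach S a b
  rw [creach_insert_iff]
  constructor
  · rintro (h1 | ⟨h1, h2⟩ | ⟨h1, h2⟩)
    · exact h1
    · exact creach_trans h1 (creach_trans h h2)
    · exact creach_trans h1 (creach_trans (creach_symm h) h2)
  · exact Or.inl

lemma ncomp_insert_of_not_reach [Fintype V] {S : Finset (Sym2 V)} {x y : V}
    (h : ¬ creach S x y) : ncomp S = ncomp (insert s(x,y) S) + 1 := by
  classical
  set s1 : Setoid V := csetoid S with hs1
  set s2 : Setoid V := csetoid (insert s(x,y) S) with hs2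
  have key : ∀ u v : V, s2.r u v ↔
      (creach S u v ∨ (creach S u x ∧ creach S y v) ∨ (creach S u y ∧ creach S x v)) :=
    fun u v => creach_insert_iff
  -- the map from Q2 to classes of Q1 different from that of y
  have hxy1 : (Quotient.mk s1 x) ≠ (Quotient.mk s1 y) := by
    intro hq
    exact h (Quotient.eq''.mp hq)
  let ψ : V → {q : Quotient s1 // q ≠ Quotient.mk s1 y} := fun v =>
    if hv : creach S v y then ⟨Quotient.mk s1 x, hxy1⟩
    else ⟨Quotient.mk s1 v, by
      intro hq
      exact hv (Quotient.eq''.mp hq)⟩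
  have hψ : ∀ u v : V, s2.r u v → ψ u = ψ v := by
    intro u v huv
    rcases (key u v).mp huv with h1 | ⟨h1, h2⟩ | ⟨h1, h2⟩
    · by_cases hu : creach S u y
      · have hv : creach S v y := creach_trans (creach_symm h1) hu
        simp only [ψ, dif_pos hu, dif_pos hv]
      · have hv : ¬ creach S v y := fun hv => hu (creach_trans h1 hv)
        simp only [ψ, dif_neg hu, dif_neg hv]
        exact Subtype.ext (Quotient.sound' h1)
    · -- u ~ x, y ~ v
      have hu : ¬ creach S u y := fun huy => h (creach_trans (creach_symm h1) huy)
      have hv : creach S v y := creach_symm h2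
      simp only [ψ, dif_neg hu, dif_pos hv]
      exact Subtype.ext (Quotient.sound' h1)
    · -- u ~ y, x ~ v
      have hu : creach S u y := h1
      have hv : ¬ creach S v y := fun hvy => h (creach_trans h2 hvy)
      simp only [ψ, dif_pos hu, dif_neg hv]
      exact Subtype.ext (Quotient.sound' h2)
  let θ : Quotient s2 → {q : Quotient s1 // q ≠ Quotient.mk s1 y} :=
    Quotient.lift ψ hψ
  have hbij : Function.Bijective θ := by
    constructor
    · intro a b
      induction a using Quotient.inductionOn
      induction b using Quotient.inductionOn
      rename_i u v
      intro hab
      apply Quotient.sound'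
      show s2.r u v
      rw [key]
      by_cases hu : creach S u y <;> by_cases hv : creach S v y
      · exact Or.inl (creach_trans hu (creach_symm hv))
      · -- θ u = [x], θ v = [v] : x ~ v
        simp only [θ, ψ, Quotient.lift_mk, dif_pos hu, dif_neg hv] at hab
        have : creach S x v := Quotient.eq''.mp (congrArg Subtype.val hab)
        exact Or.inr (Or.inr ⟨hu, this⟩)
      · simp only [θ, ψ, Quotient.lift_mk, dif_neg hu, dif_pos hv] at hab
        have : creach S u x := Quotient.eq''.mp (congrArg Subtype.val hab)
        exact Or.inr (Or.inl ⟨this, creach_symm hv⟩)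
      · simp only [θ, ψ, Quotient.lift_mk, dif_neg hu, dif_neg hv] at hab
        have : creach S u v := Quotient.eq''.mp (congrArg Subtype.val hab)
        exact Or.inl this
    · rintro ⟨q, hq⟩
      induction q using Quotient.inductionOn
      rename_i v
      have hv : ¬ creach S v y := by
        intro hvy
        exact hq (Quotient.sound' hvy)
      refine ⟨Quotient.mk s2 v, ?_⟩
      simp only [θ, ψ, Quotient.lift_mk, dif_neg hv]
  -- now count
  haveI : Finite (Quotient s1) := Quotient.finite s1
  haveI : Finite (Quotient s2) := Quotient.finite s2
  have h2 : ncomp (insert s(x,y) S) = Nat.card {q : Quotient s1 // q ≠ Quotient.mk s1 y} :=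
    Nat.card_congr (Equiv.ofBijective θ hbij)
  have e : Quotient s1 ≃ {q : Quotient s1 // q = Quotient.mk s1 y} ⊕
      {q : Quotient s1 // q ≠ Quotient.mk s1 y} :=
    (Equiv.sumCompl (fun q : Quotient s1 => q = Quotient.mk s1 y)).symm
  have h1' : ncomp S = Nat.card {q : Quotient s1 // q = Quotient.mk s1 y} +
      Nat.card {q : Quotient s1 // q ≠ Quotient.mk s1 y} := by
    show Nat.card (Quotient (csetoid S)) = _
    rw [← hs1, Nat.card_congr e, Nat.card_sum]
  have hone : Nat.card {q : Quotient s1 // q = Quotient.mk s1 y} = 1 := by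
    haveI : Fintype (Quotient s1) := Fintype.ofFinite _
    rw [Nat.card_eq_fintype_card, Fintype.card_subtype_eq]
  omega


variable [Fintype V]

lemma ncomp_insert_le (S : Finset (Sym2 V)) (e : Sym2 V) :
    ncomp (insert e S) ≤ ncomp S := by
  induction e using Sym2.ind with
  | _ x y =>
    by_cases h : creach S x y
    · rw [ncomp_insert_of_reach h]
    · rw [ncomp_insert_of_not_reach h]; omega

lemma ncomp_le_insert (S : Finset (Sym2 V)) (e : Sym2 V) :
    ncomp S ≤ ncomp (insert e S) + 1 := by
  induction e using Sym2.ind with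
  | _ x y =>
    by_cases h : creach S x y
    · rw [ncomp_insert_of_reach h]; omega
    · rw [ncomp_insert_of_not_reach h]

lemma ncomp_union_le (S U : Finset (Sym2 V)) : ncomp (S ∪ U) ≤ ncomp S := by
  induction U using Finset.induction with
  | empty => rw [Finset.union_empty]
  | @insert a U ha ih =>
    rw [Finset.union_insert]
    exact le_trans (ncomp_insert_le _ a) ih

lemma ncomp_le_of_subset {S T : Finset (Sym2 V)} (h : S ⊆ T) : ncomp T ≤ ncomp S := by
  have : S ∪ T = T := Finset.union_eq_right.mpr h
  calc ncomp T = ncomp (S ∪ T) := by rw [this]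
  _ ≤ ncomp S := ncomp_union_le S T

lemma ncomp_le_union_add_card (S U : Finset (Sym2 V)) :
    ncomp S ≤ ncomp (S ∪ U) + U.card := by
  induction U using Finset.induction with
  | empty => simp
  | @insert a U ha ih =>
    rw [Finset.union_insert, Finset.card_insert_of_notMem ha]
    have := ncomp_le_insert (S ∪ U) a
    omega

lemma ncomp_dim {S T : Finset (Sym2 V)} (h : S ⊆ T) (e : Sym2 V) :
    ncomp (insert e S) + ncomp T ≤ ncomp S + ncomp (insert e T) := by
  induction e using Sym2.ind with
  | _ x y =>
    by_cases hS : creach S x y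
    · rw [ncomp_insert_of_reach hS, ncomp_insert_of_reach (creach_mono h hS)]
    · by_cases hT : creach T x y
      · rw [ncomp_insert_of_reach hT]
        have := ncomp_insert_of_not_reach hS
        omega
      · have h1 := ncomp_insert_of_not_reach hS
        have h2 := ncomp_insert_of_not_reach hT
        omega

lemma ncomp_supermod (X : Finset (Sym2 V)) : ∀ (Y : Finset (Sym2 V)),
    ncomp X + ncomp Y ≤ ncomp (X ∪ Y) + ncomp (X ∩ Y) := by
  suffices h : ∀ (n : ℕ) (Y : Finset (Sym2 V)), (Y \ X).card = n →
      ncomp X + ncomp Y ≤ ncomp (X ∪ Y) + ncomp (X ∩ Y) by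
    intro Y; exact h _ Y rfl
  intro n
  induction n with
  | zero =>
    intro Y hY
    have hYX : Y ⊆ X := by
      rw [← Finset.sdiff_eq_empty_iff_subset]
      exact Finset.card_eq_zero.mp hY
    rw [Finset.union_eq_left.mpr hYX, Finset.inter_eq_right.mpr hYX, Nat.add_comm]
  | succ n ih =>
    intro Y hY
    have hne : (Y \ X).Nonempty := by
      rw [← Finset.card_pos, hY]; omega
    obtain ⟨e, he⟩ := hne
    have heY : e ∈ Y := (Finset.mem_sdiff.mp he).1
    have heX : e ∉ X := (Finset.mem_sdiff.mp he).2
    set Y' := Y.erase e with hY'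
    have h1 : (Y' \ X).card = n := by
      rw [hY', Finset.erase_sdiff_comm, Finset.card_erase_of_mem he, hY]
      omega
    have hIH := ih Y' h1
    have hXY' : X ∩ Y' = X ∩ Y := by
      rw [hY']
      ext a
      simp only [Finset.mem_inter, Finset.mem_erase]
      constructor
      · rintro ⟨ha, _, hb⟩; exact ⟨ha, hb⟩
      · rintro ⟨ha, hb⟩
        refine ⟨ha, ?_, hb⟩
        rintro rfl; exact heX ha
    have hins : insert e Y' = Y := Finset.insert_erase heY
    have hins2 : insert e (X ∪ Y') = X ∪ Y := by
      rw [← Finset.union_insert, hins]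
    have hdim := ncomp_dim (Finset.subset_union_right : Y' ⊆ X ∪ Y') e
    rw [hins, hins2] at hdim
    rw [hXY'] at hIH
    omega

lemma ncomp_empty_eq (hV : True) : ncomp (∅ : Finset (Sym2 V)) = Fintype.card V := by
  have : ∀ u v : V, (csetoid (∅ : Finset (Sym2 V))).r u v ↔ u = v := by
    intro u v
    constructor
    · intro h
      induction h with
      | refl => rfl
      | tail _ hstep ih =>
        exact absurd hstep (by simp [crel])
    · rintro rfl; exact creach_refl _ u
  rw [ncomp, ← Nat.card_eq_fintype_card]
  apply Nat.card_congr
  refine Equiv.ofBijective (Quotient.lift id (fun u v huv => (this u v).mp huv)) ?_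
  constructor
  · intro a b
    induction a using Quotient.inductionOn
    induction b using Quotient.inductionOn
    intro h
    exact Quotient.sound' ((this _ _).mpr h)
  · intro v; exact ⟨Quotient.mk _ v, rfl⟩


section R2
/-- ordered pairs of an unordered pair -/
def ordp : Sym2 V → Finset (V × V) :=
  Sym2.lift ⟨fun a b => ({(a,b),(b,a)} : Finset (V × V)), fun a b => Finset.pair_comm _ _⟩

lemma mem_ordp (e : Sym2 V) (p : V × V) : p ∈ ordp e ↔ e = s(p.1, p.2) := by
  induction e using Sym2.ind with
  | _ u v =>
    show p ∈ ({(u,v),(v,u)} : Finset (V × V)) ↔ _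
    rw [Finset.mem_insert, Finset.mem_singleton, Sym2.eq_iff]
    constructor
    · rintro (rfl | rfl)
      · exact Or.inl ⟨rfl, rfl⟩
      · exact Or.inr ⟨rfl, rfl⟩
    · rintro (⟨rfl, rfl⟩ | ⟨rfl, rfl⟩)
      · exact Or.inl (Prod.ext rfl rfl)
      · exact Or.inr (Prod.ext rfl rfl)

lemma card_ordp {e : Sym2 V} (he : ¬ e.IsDiag) : (ordp e).card = 2 := by
  induction e using Sym2.ind with
  | _ u v =>
    have huv : u ≠ v := by
      intro h
      exact he (by rw [h]; exact Sym2.mk_isDiag_iff.mpr rfl)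
    show ({(u,v),(v,u)} : Finset (V × V)).card = 2
    rw [Finset.card_insert_of_notMem, Finset.card_singleton]
    rw [Finset.mem_singleton]
    intro h
    rw [Prod.ext_iff] at h
    exact huv h.1

lemma ncomp_le_card [Fintype V] (N : Finset (Sym2 V)) : ncomp N ≤ Fintype.card V := by
  rw [← ncomp_empty_eq trivial]
  exact ncomp_le_of_subset (Finset.empty_subset N)

/-- A set of non-loop edges all of whose endpoints lie inside components:
few edges. -/
lemma double_card_le [Fintype V] (N : Finset (Sym2 V)) (hN : ∀ e ∈ N, ¬ e.IsDiag) :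
    2 * N.card ≤ (Fintype.card V - ncomp N + 1) * (Fintype.card V - ncomp N) := by
  classical
  set st := csetoid N with hst
  haveI : Fintype (Quotient st) := Fintype.ofFinite _
  set q : V → Quotient st := Quotient.mk st with hq
  set sz : Quotient st → ℕ := fun Q => (Finset.univ.filter (fun v => q v = Q)).card with hsz
  set n := Fintype.card V with hn
  set k := Fintype.card (Quotient st) with hk
  have hkn : ncomp N = k := Nat.card_eq_fintype_card
  have h_n : ∑ Q, sz Q = n := by
    rw [hn, ← Finset.card_univ]
    exact (Finset.card_eq_sum_card_fiberwise (fun v _ => Finset.mem_univ (q v))).symm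
  have h_1 : ∀ Q : Quotient st, 1 ≤ sz Q := by
    intro Q
    induction Q using Quotient.inductionOn with
    | _ v =>
      rw [hsz, Nat.one_le_iff_ne_zero, ← Nat.pos_iff_ne_zero, Finset.card_pos]
      exact ⟨v, Finset.mem_filter.mpr ⟨Finset.mem_univ v, rfl⟩⟩
  have h_le' : ∀ Q : Quotient st, sz Q + (k - 1) ≤ n := by
    intro Q
    have h1 : sz Q + ∑ Q' ∈ Finset.univ.erase Q, sz Q' = n := by
      rw [← h_n]
      exact Finset.add_sum_erase _ sz (Finset.mem_univ Q)
    have h2 : (k - 1) ≤ ∑ Q' ∈ Finset.univ.erase Q, sz Q' := by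
      calc k - 1 = (Finset.univ.erase Q).card := by
            rw [Finset.card_erase_of_mem (Finset.mem_univ Q), Finset.card_univ, hk]
      _ = ∑ Q' ∈ Finset.univ.erase Q, 1 := by rw [Finset.card_eq_sum_ones]
      _ ≤ _ := Finset.sum_le_sum (fun Q' _ => h_1 Q')
    omega
  set P : Finset (V × V) :=
    Finset.univ.filter (fun ab : V × V => ab.1 ≠ ab.2 ∧ q ab.1 = q ab.2) with hP
  -- claim 1
  have hsub : N.biUnion ordp ⊆ P := by
    intro p hp
    rw [Finset.mem_biUnion] at hp
    obtain ⟨e, heN, hpe⟩ := hp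
    rw [mem_ordp] at hpe
    subst hpe
    have hd := hN _ heN
    rw [hP, Finset.mem_filter]
    refine ⟨Finset.mem_univ _, fun h => hd (by rw [h]; exact Sym2.mk_isDiag_iff.mpr rfl), ?_⟩
    exact Quotient.sound' (creach_single heN)
  have hbc : (N.biUnion ordp).card = 2 * N.card := by
    rw [Finset.card_biUnion]
    · rw [Finset.sum_congr rfl (fun e heN => card_ordp (hN e heN))]
      rw [Finset.sum_const, smul_eq_mul, Nat.mul_comm]
    · intro e1 h1 e2 h2 hne
      rw [Function.onFun, Finset.disjoint_left]
      intro p hp1 hp2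
      rw [mem_ordp] at hp1 hp2
      exact hne (hp1.trans hp2.symm)
  have claim1 : 2 * N.card ≤ P.card := by
    rw [← hbc]
    exact Finset.card_le_card hsub
  -- claim 2
  have claim2 : P.card ≤ ∑ Q, (sz Q * sz Q - sz Q) := by
    rw [Finset.card_eq_sum_card_fiberwise
      (f := fun ab : V × V => q ab.1) (t := Finset.univ) (fun p _ => Finset.mem_univ _)]
    apply Finset.sum_le_sum
    intro Q _
    set fib := Finset.univ.filter (fun v => q v = Q) with hfib
    have hsubQ : P.filter (fun ab : V × V => q ab.1 = Q) ⊆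
        (fib ×ˢ fib) \ fib.image (fun v => (v,v)) := by
      intro ab hab
      rw [Finset.mem_filter] at hab
      obtain ⟨habP, habQ⟩ := hab
      rw [hP, Finset.mem_filter] at habP
      obtain ⟨-, hne, hqq⟩ := habP
      rw [Finset.mem_sdiff, Finset.mem_product]
      refine ⟨⟨Finset.mem_filter.mpr ⟨Finset.mem_univ _, habQ⟩,
        Finset.mem_filter.mpr ⟨Finset.mem_univ _, hqq ▸ habQ⟩⟩, ?_⟩
      rw [Finset.mem_image]
      rintro ⟨v, -, hv⟩
      apply hne
      rw [← congrArg Prod.fst hv, ← congrArg Prod.snd hv]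
    calc (P.filter (fun ab : V × V => q ab.1 = Q)).card
        ≤ ((fib ×ˢ fib) \ fib.image (fun v => (v,v))).card := Finset.card_le_card hsubQ
      _ = sz Q * sz Q - sz Q := by
          rw [Finset.card_sdiff_of_subset]
          · rw [Finset.card_product, Finset.card_image_of_injective _
              (fun a b hab => congrArg Prod.fst hab)]
          · intro p hp
            rw [Finset.mem_image] at hp
            obtain ⟨v, hv, rfl⟩ := hp
            rw [Finset.mem_product]
            exact ⟨hv, hv⟩
  -- claim 3
  have claim3 : ∑ Q, (sz Q * sz Q - sz Q) ≤ (n - k + 1) * (n - k) := by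
    have hk1 : ∀ Q : Quotient st, sz Q ≤ n - k + 1 := by
      intro Q
      have := h_le' Q
      have := h_1 Q
      have hkn' : k ≤ n := by
        rw [← h_n]
        calc k = ∑ _Q : Quotient st, 1 := by
              rw [Finset.sum_const, smul_eq_mul, Nat.mul_one, Finset.card_univ]
        _ ≤ ∑ Q, sz Q := Finset.sum_le_sum (fun Q _ => h_1 Q)
      omega
    calc ∑ Q, (sz Q * sz Q - sz Q) ≤ ∑ Q, (n - k + 1) * (sz Q - 1) := by
          apply Finset.sum_le_sum
          intro Q _
          have h1 := h_1 Q
          have h2 := hk1 Q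
          have : sz Q * sz Q - sz Q = sz Q * (sz Q - 1) := by
            rw [Nat.mul_sub, Nat.mul_one]
          rw [this]
          exact Nat.mul_le_mul_right _ h2
      _ = (n - k + 1) * ∑ Q, (sz Q - 1) := by rw [Finset.mul_sum]
      _ = (n - k + 1) * (n - k) := by
          congr 1
          have : ∑ Q, (sz Q - 1) + k = n := by
            rw [← h_n, hk, ← Finset.card_univ, Finset.card_eq_sum_ones,
              ← Finset.sum_add_distrib]
            exact Finset.sum_congr rfl (fun Q _ => by have := h_1 Q; omega)
          omega
  rw [hkn]
  omega

variable [Fintype C] [DecidableEq C] (col : Sym2 V → C)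

/-- number of edges of `S` with color `c`. -/
def cnt (c : C) (S : Finset (Sym2 V)) : ℕ := (S.filter (fun e => col e = c)).card

/-- rank in the partition matroid with capacities `f`. -/
def r2 (f : C → ℕ) (S : Finset (Sym2 V)) : ℕ := ∑ c, min (f c) (cnt col c S)

lemma cnt_union_add_cnt_inter (c : C) (X Y : Finset (Sym2 V)) :
    cnt col c (X ∪ Y) + cnt col c (X ∩ Y) = cnt col c X + cnt col c Y := by
  unfold cnt
  rw [Finset.filter_union, Finset.filter_inter_distrib]
  exact Finset.card_union_add_card_inter _ _

lemma cnt_le_of_subset (c : C) {X Y : Finset (Sym2 V)} (h : X ⊆ Y) :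
    cnt col c X ≤ cnt col c Y :=
  Finset.card_le_card (Finset.filter_subset_filter _ h)

lemma r2_submod (f : C → ℕ) (X Y : Finset (Sym2 V)) :
    r2 col f (X ∪ Y) + r2 col f (X ∩ Y) ≤ r2 col f X + r2 col f Y := by
  unfold r2
  rw [← Finset.sum_add_distrib, ← Finset.sum_add_distrib]
  apply Finset.sum_le_sum
  intro c _
  have h1 := cnt_union_add_cnt_inter col c X Y
  have h2 : cnt col c (X ∩ Y) ≤ cnt col c X :=
    cnt_le_of_subset col c Finset.inter_subset_left
  have h3 : cnt col c (X ∩ Y) ≤ cnt col c Y :=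
    cnt_le_of_subset col c Finset.inter_subset_right
  omega

lemma cnt_insert (c : C) {X : Finset (Sym2 V)} {e : Sym2 V} (he : e ∉ X) :
    cnt col c (insert e X) = cnt col c X + (if col e = c then 1 else 0) := by
  unfold cnt
  rw [Finset.filter_insert]
  by_cases h : col e = c
  · rw [if_pos h, if_pos h, Finset.card_insert_of_notMem (fun hx => he (Finset.mem_filter.mp hx).1)]
  · rw [if_neg h, if_neg h, Nat.add_zero]

lemma r2_insert_of_cap_zero {f : C → ℕ} {e : Sym2 V} (hf : f (col e) = 0)
    {X : Finset (Sym2 V)} (he : e ∉ X) : r2 col f (insert e X) = r2 col f X := by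
  unfold r2
  apply Finset.sum_congr rfl
  intro c _
  rw [cnt_insert col c he]
  by_cases h : col e = c
  · subst h; rw [hf]; simp
  · rw [if_neg h, Nat.add_zero]

lemma r2_insert_update {f : C → ℕ} {e : Sym2 V} (hf : 1 ≤ f (col e))
    {X : Finset (Sym2 V)} (he : e ∉ X) :
    r2 col f (insert e X) =
      r2 col (Function.update f (col e) (f (col e) - 1)) X + 1 := by
  unfold r2
  have : ∀ c : C, min (f c) (cnt col c (insert e X)) =
      min (Function.update f (col e) (f (col e) - 1) c) (cnt col c X) +
        (if c = col e then 1 else 0) := by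
    intro c
    rw [cnt_insert col c he]
    by_cases h : c = col e
    · subst h
      rw [Function.update_self, if_pos rfl]
      omega
    · rw [Function.update_of_ne h, if_neg h, if_neg (fun hh => h hh.symm), Nat.add_zero,
        Nat.add_zero]
  rw [Finset.sum_congr rfl (fun c _ => this c), Finset.sum_add_distrib]
  congr 1
  rw [Finset.sum_ite_eq' Finset.univ (col e) (fun _ => 1)]
  simp

lemma r2_empty (f : C → ℕ) : r2 col f ∅ = 0 := by
  unfold r2 cnt
  simp

end R2


variable [Fintype C] [DecidableEq C]

theorem main_exchange (col : Sym2 V → C) :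
    ∀ (N : ℕ) (E K : Finset (Sym2 V)) (f : C → ℕ) (t : ℕ), E.card = N →
      Disjoint E K →
      (∀ A ⊆ E, t + ncomp (A ∪ K) ≤ ncomp K + r2 col f (E \ A)) →
      ∃ S ⊆ E, S.card = t ∧ ncomp K = ncomp (S ∪ K) + t ∧ ∀ c, cnt col c S ≤ f c := by
  intro N
  induction N using Nat.strong_induction_on with
  | _ N ih =>
  intro E K f t hcard hdisj hcond
  rcases Nat.eq_zero_or_pos t with rfl | ht
  · exact ⟨∅, Finset.empty_subset E, Finset.card_empty, by rw [Finset.empty_union, Nat.add_zero],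
      fun c => by simp [cnt]⟩
  rcases Finset.eq_empty_or_nonempty E with rfl | ⟨e, he⟩
  · exfalso
    have h0 := hcond ∅ (Finset.empty_subset _)
    rw [Finset.empty_union, Finset.empty_sdiff, r2_empty] at h0
    omega
  revert he
  induction e using Sym2.ind with
  | _ x y =>
  intro he
  set E' := E.erase s(x,y) with hE'def
  have heE' : s(x,y) ∉ E' := Finset.notMem_erase _ _
  have hE'sub : E' ⊆ E := Finset.erase_subset _ _
  have hE'card : E'.card < N := by
    rw [hE'def, Finset.card_erase_of_mem he, ← hcard]
    have : 0 < E.card := Finset.card_pos.mpr ⟨_, he⟩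
    omega
  have heK : s(x,y) ∉ K := Finset.disjoint_left.mp hdisj he
  have hdisj' : Disjoint E' K := Finset.disjoint_of_subset_left hE'sub hdisj
  -- set fact: for A ⊆ E', E \ insert s(x,y) A = E' \ A
  have hsd1 : ∀ A : Finset (Sym2 V), A ⊆ E' → E \ insert s(x,y) A = E' \ A := by
    intro A hA
    ext a
    simp only [Finset.mem_sdiff, Finset.mem_insert, hE'def, Finset.mem_erase]
    tauto
  -- set fact: for A ⊆ E', E \ A = insert s(x,y) (E' \ A)
  have hsd2 : ∀ A : Finset (Sym2 V), A ⊆ E' → E \ A = insert s(x,y) (E' \ A) := by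
    intro A hA
    have hxA : s(x,y) ∉ A := fun hx => heE' (hA hx)
    ext a
    simp only [Finset.mem_sdiff, Finset.mem_insert, hE'def, Finset.mem_erase]
    constructor
    · rintro ⟨haE, haA⟩
      by_cases hax : a = s(x,y)
      · exact Or.inl hax
      · exact Or.inr ⟨⟨hax, haE⟩, haA⟩
    · rintro (rfl | ⟨⟨hax, haE⟩, haA⟩)
      · exact ⟨he, hxA⟩
      · exact ⟨haE, haA⟩
  by_cases hK : creach K x y
  · -- the edge is a loop relative to K : delete it
    have hcc : ∀ A ⊆ E', t + ncomp (A ∪ K) ≤ ncomp K + r2 col f (E' \ A) := by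
      intro A hA
      have h0 := hcond (insert s(x,y) A) (Finset.insert_subset he (hA.trans hE'sub))
      rw [Finset.insert_union, hsd1 A hA] at h0
      have hr : creach (A ∪ K) x y := creach_mono Finset.subset_union_right hK
      rw [ncomp_insert_of_reach hr] at h0
      exact h0
    obtain ⟨S, hS1, hS2, hS3, hS4⟩ := ih E'.card hE'card E' K f t rfl hdisj' hcc
    exact ⟨S, fun a ha => hE'sub (hS1 ha), hS2, hS3, hS4⟩
  by_cases hf0 : f (col s(x,y)) = 0
  · -- capacity zero: delete it
    have hcc : ∀ A ⊆ E', t + ncomp (A ∪ K) ≤ ncomp K + r2 col f (E' \ A) := by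
      intro A hA
      have h0 := hcond A (hA.trans hE'sub)
      rw [hsd2 A hA,
        r2_insert_of_cap_zero col hf0 (fun hx => heE' (Finset.mem_sdiff.mp hx).1)] at h0
      exact h0
    obtain ⟨S, hS1, hS2, hS3, hS4⟩ := ih E'.card hE'card E' K f t rfl hdisj' hcc
    exact ⟨S, fun a ha => hE'sub (hS1 ha), hS2, hS3, hS4⟩
  -- main case: non-loop edge with positive capacity
  by_cases hdel : ∀ A ⊆ E', t + ncomp (A ∪ K) ≤ ncomp K + r2 col f (E' \ A)
  · obtain ⟨S, hS1, hS2, hS3, hS4⟩ := ih E'.card hE'card E' K f t rfl hdisj' hdel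
    exact ⟨S, fun a ha => hE'sub (hS1 ha), hS2, hS3, hS4⟩
  set f' := Function.update f (col s(x,y)) (f (col s(x,y)) - 1) with hf'def
  set K' := insert s(x,y) K with hK'def
  have hKK' : ncomp K = ncomp K' + 1 := ncomp_insert_of_not_reach hK
  have hfpos : 1 ≤ f (col s(x,y)) := by omega
  by_cases hcon : ∀ A ⊆ E', (t-1) + ncomp (A ∪ K') ≤ ncomp K' + r2 col f' (E' \ A)
  · -- contract the edge
    have hdisj'' : Disjoint E' K' := by
      rw [hK'def, Finset.disjoint_insert_right]
      exact ⟨heE', hdisj'⟩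
    obtain ⟨S', hS1, hS2, hS3, hS4⟩ := ih E'.card hE'card E' K' f' (t-1) rfl hdisj'' hcon
    have hxS' : s(x,y) ∉ S' := fun hx => heE' (hS1 hx)
    refine ⟨insert s(x,y) S', Finset.insert_subset he (hS1.trans hE'sub), ?_, ?_, ?_⟩
    · rw [Finset.card_insert_of_notMem hxS', hS2]; omega
    · have hus : insert s(x,y) S' ∪ K = S' ∪ K' := by
        rw [hK'def, Finset.union_insert, Finset.insert_union]
      rw [hus, hKK', hS3]; omega
    · intro c
      rw [cnt_insert col c hxS']
      have h4 := hS4 c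
      by_cases hc : col s(x,y) = c
      · subst hc
        rw [if_pos rfl]
        rw [hf'def, Function.update_self] at h4
        omega
      · rw [if_neg hc]
        rw [hf'def, Function.update_of_ne (fun hh => hc hh.symm)] at h4
        omega
  -- contradiction branch
  exfalso
  push_neg at hdel hcon
  obtain ⟨A, hA, hAlt⟩ := hdel
  obtain ⟨B, hB, hBlt⟩ := hcon
  have hxA : s(x,y) ∉ A := fun hx => heE' (hA hx)
  have hxB : s(x,y) ∉ B := fun hx => heE' (hB hx)
  have hBU : B ∪ K' = insert s(x,y) (B ∪ K) := by
    rw [hK'def, Finset.union_insert]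
  rw [hBU] at hBlt
  have hF2 : r2 col f (E \ B) = r2 col f' (E' \ B) + 1 := by
    rw [hsd2 B hB, hf'def]
    exact r2_insert_update col hfpos (fun hx => heE' (Finset.mem_sdiff.mp hx).1)
  have hsum := ncomp_supermod (A ∪ K) (insert s(x,y) (B ∪ K))
  have hU : (A ∪ K) ∪ insert s(x,y) (B ∪ K) = insert s(x,y) (A ∪ B) ∪ K := by
    ext a
    simp only [Finset.mem_union, Finset.mem_insert]
    tauto
  have hI : (A ∪ K) ∩ insert s(x,y) (B ∪ K) = (A ∩ B) ∪ K := by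
    ext a
    by_cases hax : a = s(x,y)
    · subst hax
      simp only [Finset.mem_inter, Finset.mem_union, Finset.mem_insert, Finset.mem_inter]
      simp [hxA, hxB, heK]
    · simp only [Finset.mem_inter, Finset.mem_union, Finset.mem_insert, hax, false_or]
      tauto
  rw [hU, hI] at hsum
  have hsum2 := r2_submod col f (E' \ A) (E \ B)
  have hU2 : (E' \ A) ∪ (E \ B) = E \ (A ∩ B) := by
    ext a
    by_cases hax : a = s(x,y)
    · subst hax
      simp only [Finset.mem_union, Finset.mem_sdiff, Finset.mem_inter]
      simp [he, hxB, heE']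
    · simp only [Finset.mem_union, Finset.mem_sdiff, hE'def, Finset.mem_erase,
        Finset.mem_inter, hax]
      tauto
  have hI2 : (E' \ A) ∩ (E \ B) = E \ insert s(x,y) (A ∪ B) := by
    ext a
    by_cases hax : a = s(x,y)
    · subst hax
      simp only [Finset.mem_inter, Finset.mem_sdiff, Finset.mem_insert]
      simp [he, heE']
    · simp only [Finset.mem_inter, Finset.mem_sdiff, hE'def, Finset.mem_erase,
        Finset.mem_insert, Finset.mem_union, hax, false_or]
      tauto
  rw [hU2, hI2] at hsum2
  have hc1 : t + ncomp ((A ∩ B) ∪ K) ≤ ncomp K + r2 col f (E \ (A ∩ B)) :=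
    hcond (A ∩ B) (Finset.inter_subset_left.trans (hA.trans hE'sub))
  have hc2 : t + ncomp (insert s(x,y) (A ∪ B) ∪ K) ≤
      ncomp K + r2 col f (E \ insert s(x,y) (A ∪ B)) :=
    hcond (insert s(x,y) (A ∪ B))
      (Finset.insert_subset he ((Finset.union_subset hA hB).trans hE'sub))
  omega

lemma two_mul_choose_two (t : ℕ) : 2 * t.choose 2 = t * (t - 1) := by
  rcases Nat.eq_zero_or_pos t with rfl | ht
  · rfl
  obtain ⟨s, rfl⟩ := Nat.exists_eq_add_of_le ht
  obtain ⟨m, hm⟩ := Nat.even_mul_succ_self s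
  rw [Nat.choose_two_right]
  have h1 : (1 + s) * (1 + s - 1) = s * (s + 1) := by
    rw [Nat.add_sub_cancel_left]
    ring
  rw [h1, hm]
  omega

lemma cond_of_density (col : Sym2 V → C) (f g : C → ℕ) (E : Finset (Sym2 V)) (t w : ℕ)
    (hnd : ∀ e ∈ E, ¬ e.IsDiag)
    (hn : Fintype.card V = w + t) (ht : 1 ≤ t)
    (hE : t.choose 2 < E.card)
    (hg : ∀ c, cnt col c E ≤ g c)
    (hgf : ∀ c, t * g c ≤ E.card * f c) :
    ∀ A ⊆ E, t + ncomp A ≤ Fintype.card V + r2 col f (E \ A) := by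
  intro A hA
  classical
  set R : Finset C := Finset.univ.filter (fun c => f c ≤ cnt col c (E \ A)) with hR
  set r : ℕ := ∑ c ∈ R, f c with hr
  set ER : Finset (Sym2 V) := E.filter (fun e => col e ∈ R) with hER
  set Y : Finset (Sym2 V) := (E \ A) \ ER with hY
  -- (a) r2 f (E \ A) ≥ r + Y.card
  have ha : r + Y.card ≤ r2 col f (E \ A) := by
    have hsplit : r2 col f (E \ A) =
        ∑ c ∈ R, min (f c) (cnt col c (E \ A)) +
          ∑ c ∈ Finset.univ.filter (fun c => ¬ (f c ≤ cnt col c (E \ A))),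
            min (f c) (cnt col c (E \ A)) := by
      rw [r2, hR, ← Finset.sum_filter_add_sum_filter_not Finset.univ
        (fun c => f c ≤ cnt col c (E \ A))]
    have h1 : ∑ c ∈ R, min (f c) (cnt col c (E \ A)) = r := by
      rw [hr]
      apply Finset.sum_congr rfl
      intro c hc
      rw [hR, Finset.mem_filter] at hc
      exact Nat.min_eq_left hc.2
    have h2 : Y.card ≤ ∑ c ∈ Finset.univ.filter (fun c => ¬ (f c ≤ cnt col c (E \ A))),
        min (f c) (cnt col c (E \ A)) := by
      have hYcard : Y.card = ∑ c ∈ Finset.univ, cnt col c Y :=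
        Finset.card_eq_sum_card_fiberwise (fun e _ => Finset.mem_univ (col e))
      have hYsplit : Y.card =
          ∑ c ∈ R, cnt col c Y +
            ∑ c ∈ Finset.univ.filter (fun c => ¬ (f c ≤ cnt col c (E \ A))), cnt col c Y := by
        rw [hYcard, hR, ← Finset.sum_filter_add_sum_filter_not Finset.univ
          (fun c => f c ≤ cnt col c (E \ A))]
      have hY0 : ∀ c ∈ R, cnt col c Y = 0 := by
        intro c hc
        rw [cnt, Finset.card_eq_zero, Finset.filter_eq_empty_iff]
        intro e heY
        rw [hY, Finset.mem_sdiff] at heY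
        intro hcol
        apply heY.2
        rw [hER, Finset.mem_filter]
        exact ⟨(Finset.mem_sdiff.mp heY.1).1, hcol ▸ hc⟩
      rw [hYsplit, Finset.sum_congr rfl hY0, Finset.sum_const, smul_eq_mul,
        Nat.mul_zero, Nat.zero_add]
      apply Finset.sum_le_sum
      intro c hc
      rw [Finset.mem_filter] at hc
      have hYsub : Y ⊆ E \ A := by rw [hY]; exact Finset.sdiff_subset
      have := cnt_le_of_subset col c hYsub
      omega
    omega
  -- (b) ncomp A ≤ ncomp (E \ ER) + Y.card
  have hb : ncomp A ≤ ncomp (E \ ER) + Y.card := by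
    have h1 : ncomp A ≤ ncomp (A ∪ Y) + Y.card := ncomp_le_union_add_card A Y
    have h2 : E \ ER ⊆ A ∪ Y := by
      intro e he'
      rw [Finset.mem_sdiff] at he'
      rw [Finset.mem_union]
      by_cases heA : e ∈ A
      · exact Or.inl heA
      · refine Or.inr ?_
        rw [hY, Finset.mem_sdiff, Finset.mem_sdiff]
        exact ⟨⟨he'.1, heA⟩, he'.2⟩
    have h3 : ncomp (A ∪ Y) ≤ ncomp (E \ ER) := ncomp_le_of_subset h2
    omega
  -- (c) t + ncomp (E \ ER) ≤ card V + r
  have hc : t + ncomp (E \ ER) ≤ Fintype.card V + r := by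
    set N := E \ ER with hN
    set k := ncomp N with hk
    have hkcard : k ≤ Fintype.card V := ncomp_le_card N
    rcases Nat.lt_or_ge r t with hrt | hrt
    swap
    · omega
    by_contra hcon
    push_neg at hcon
    -- k ≥ w + r + 1
    have hk1 : w + r + 1 ≤ k := by omega
    have hcount := double_card_le N (fun e he => hnd e (Finset.mem_sdiff.mp he).1)
    rw [← hk, hn] at hcount
    -- n - k ≤ t - r - 1
    have hd : Fintype.card V - k ≤ t - r - 1 := by rw [hn]; omega
    set d := t - r with hdd
    have hd1 : 1 ≤ d := by omega
    have hcount2 : 2 * N.card ≤ d * (d - 1) := by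
      calc 2 * N.card ≤ (w + t - k + 1) * (w + t - k) := hcount
        _ ≤ d * (d-1) := by
            apply Nat.mul_le_mul
            · omega
            · omega
    -- |ER| ≤ ∑ g over R
    have hERg : ER.card ≤ ∑ c ∈ R, g c := by
      have h1 : ER.card = ∑ c ∈ R, cnt col c ER := by
        apply Finset.card_eq_sum_card_fiberwise
        intro e heER
        rw [Finset.mem_coe, hER, Finset.mem_filter] at heER
        exact heER.2
      rw [h1]
      apply Finset.sum_le_sum
      intro c _
      calc cnt col c ER ≤ cnt col c E :=
            cnt_le_of_subset col c (by rw [hER]; exact Finset.filter_subset _ _)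
        _ ≤ g c := hg c
    have hsum : t * (∑ c ∈ R, g c) ≤ E.card * r := by
      rw [Finset.mul_sum, hr, Finset.mul_sum]
      exact Finset.sum_le_sum (fun c _ => hgf c)
    have hEcard : N.card + ER.card = E.card := by
      rw [hN]
      exact Finset.card_sdiff_add_card_eq_card (by rw [hER]; exact Finset.filter_subset _ _)
    -- multiply out
    have hstep : 2 * E.card * d ≤ t * d * (d - 1) + 2 * (E.card * r) := by
      have h1 : 2 * t * N.card ≤ t * (d * (d-1)) := by
        calc 2 * t * N.card = t * (2 * N.card) := by ring
          _ ≤ t * (d * (d-1)) := Nat.mul_le_mul_left t hcount2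
      have h2 : 2 * (t * ER.card) ≤ 2 * (E.card * r) := by
        apply Nat.mul_le_mul_left
        calc t * ER.card ≤ t * (∑ c ∈ R, g c) := Nat.mul_le_mul_left t hERg
          _ ≤ E.card * r := hsum
      have h3 : 2 * E.card * t = 2 * t * N.card + 2 * (t * ER.card) := by
        rw [← hEcard]; ring
      -- from h1,h3 : 2 E t ≤ t d (d-1) + 2 E r, but we want with d...
      have h4 : 2 * E.card * t ≤ t * (d * (d-1)) + 2 * (E.card * r) := by omega
      -- now 2*E.card*d ≤ 2*E.card*t since d ≤ t
      have h5 : 2 * E.card * d ≤ 2 * E.card * t :=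
        Nat.mul_le_mul_left _ (by omega)
      calc 2 * E.card * d ≤ 2 * E.card * t := h5
        _ ≤ t * (d * (d-1)) + 2 * (E.card * r) := h4
        _ = t * d * (d-1) + 2 * (E.card * r) := by ring
    have h6 : 2 * E.card * d + 2 * (E.card * r) = 2 * E.card * t := by
      have hdr : d + r = t := by omega
      calc 2 * E.card * d + 2 * (E.card * r) = 2 * E.card * (d + r) := by ring
        _ = 2 * E.card * t := by rw [hdr]
    have h7 : 2 * E.card * d + 2 * (E.card * r) ≤ t * d * (d - 1) + 2 * (E.card * r) := by
      rw [h6]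
      calc 2 * E.card * t = 2 * E.card * t := rfl
        _ ≤ t * d * (d-1) + 2 * (E.card * r) := by
            have := hstep
            calc 2 * E.card * t ≤ 2 * E.card * t := le_refl _
              _ ≤ t * d * (d-1) + 2*(E.card * r) := by
                  have h4' : 2 * E.card * t ≤ t * (d * (d-1)) + 2 * (E.card * r) := by
                    have h1 : 2 * t * N.card ≤ t * (2 * N.card) := by ring_nf; exact le_refl _
                    have h1' : t * (2 * N.card) ≤ t * (d * (d-1)) :=
                      Nat.mul_le_mul_left t hcount2
                    have h2 : t * ER.card ≤ E.card * r :=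
                      le_trans (Nat.mul_le_mul_left t hERg) hsum
                    have h3 : 2 * E.card * t = 2 * t * N.card + 2 * (t * ER.card) := by
                      rw [← hEcard]; ring
                    calc 2 * E.card * t = 2 * t * N.card + 2 * (t * ER.card) := h3
                      _ ≤ t * (d * (d-1)) + 2 * (E.card * r) := by
                          have ha1 : 2 * t * N.card ≤ t * (d * (d-1)) := le_trans h1 h1'
                          have ha2 : 2 * (t * ER.card) ≤ 2 * (E.card * r) :=
                            Nat.mul_le_mul_left 2 h2
                          exact Nat.add_le_add ha1 ha2
                  calc 2 * E.card * t ≤ t * (d * (d-1)) + 2 * (E.card * r) := h4'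
                    _ = t * d * (d-1) + 2 * (E.card * r) := by ring
    have h8 : 2 * E.card * d ≤ t * d * (d - 1) := Nat.le_of_add_le_add_right h7
    have h9 : (2 * E.card) * d ≤ (t * (d - 1)) * d := by
      calc (2 * E.card) * d = 2 * E.card * d := by ring
        _ ≤ t * d * (d-1) := h8
        _ = (t * (d-1)) * d := by ring
    have h10 : 2 * E.card ≤ t * (d - 1) := Nat.le_of_mul_le_mul_right h9 (by omega)
    have h11 : t * (d - 1) ≤ t * (t - 1) := Nat.mul_le_mul_left t (by omega)
    have h12 : t * (t - 1) < 2 * E.card := by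
      rw [← two_mul_choose_two]
      omega
    exact Nat.lt_irrefl _ (lt_of_lt_of_le (lt_of_lt_of_le h12 h10) h11)
  calc t + ncomp A ≤ t + ncomp (E \ ER) + Y.card := by omega
    _ ≤ Fintype.card V + r + Y.card := by omega
    _ ≤ Fintype.card V + r2 col f (E \ A) := by omega

lemma fromEdgeSet_reachable_iff (S : Finset (Sym2 V)) (u v : V) :
    (SimpleGraph.fromEdgeSet (S : Set (Sym2 V))).Reachable u v ↔ creach S u v := by
  rw [SimpleGraph.reachable_iff_reflTransGen]
  constructor
  · intro h
    refine Relation.ReflTransGen.mono ?_ _ _ h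
    intro a b hab
    rw [SimpleGraph.fromEdgeSet_adj] at hab
    exact hab.1
  · intro h
    induction h with
    | refl => exact Relation.ReflTransGen.refl
    | @tail b c hub hbc ih =>
      by_cases hbceq : b = c
      · subst hbceq; exact ih
      · exact Relation.ReflTransGen.tail ih
          (by rw [SimpleGraph.fromEdgeSet_adj]; exact ⟨hbc, hbceq⟩)

end FCF

open FCF in
/-- A `g`-chromatic graph of order `n` with more than `C(n−w,2)` edges has an
`f`-chromatic spanning forest with exactly `w` components, provided
`g(c) ≤ (|E(G)|/(n−w))·f(c)` for every color `c`. -/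
theorem g_chromatic_has_f_chromatic_forest {V C : Type*} [Fintype V] [Fintype C]
    (G : SimpleGraph V) (color : Sym2 V → C) (f g : C → ℕ) (n w : ℕ)
    (hn : n = Fintype.card V) (hw1 : 1 ≤ w) (hw2 : w ≤ n - 1)
    (hE : (n - w).choose 2 < G.edgeSet.ncard)
    (hg : ∀ c : C, {e ∈ G.edgeSet | color e = c}.ncard ≤ g c)
    (hgf : ∀ c : C, (g c : ℝ) ≤ ((G.edgeSet.ncard : ℝ) / ((n : ℝ) - (w : ℝ))) * (f c : ℝ)) :
    ∃ F : SimpleGraph V, F ≤ G ∧ F.IsAcyclic ∧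
      Nat.card F.ConnectedComponent = w ∧
      ∀ c : C, {e ∈ F.edgeSet | color e = c}.ncard ≤ f c := by
  classical
  have hwn : w < n := by omega
  set t := n - w with htdef
  have htw : w + t = n := by omega
  have ht : 1 ≤ t := by omega
  set E : Finset (Sym2 V) := G.edgeSet.toFinite.toFinset with hEdef
  have hmemE : ∀ e, e ∈ E ↔ e ∈ G.edgeSet := fun e => Set.Finite.mem_toFinset _
  have hEcard : E.card = G.edgeSet.ncard := by
    rw [hEdef, ← Set.ncard_eq_toFinset_card]
  have hnd : ∀ e ∈ E, ¬ e.IsDiag := fun e he =>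
    G.not_isDiag_of_mem_edgeSet ((hmemE e).mp he)
  have hgcnt : ∀ c, cnt color c E ≤ g c := by
    intro c
    have hs : {e ∈ G.edgeSet | color e = c} =
        ↑(E.filter (fun e => color e = c)) := by
      ext e
      simp only [Set.mem_setOf_eq, Finset.coe_filter, hmemE e]
    have := hg c
    rw [hs, Set.ncard_coe_finset] at this
    exact this
  have hcast : ((n : ℝ) - (w : ℝ)) = (t : ℝ) := by
    rw [htdef, Nat.cast_sub (le_of_lt hwn)]
  have htpos : (0 : ℝ) < (t : ℝ) := by exact_mod_cast ht
  have hgf' : ∀ c, t * g c ≤ E.card * f c := by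
    intro c
    have h1 := hgf c
    rw [hcast, ← hEcard] at h1
    have h2 : (g c : ℝ) * (t : ℝ) ≤ (E.card : ℝ) * (f c : ℝ) := by
      rw [div_mul_eq_mul_div] at h1
      exact (le_div_iff₀ htpos).mp h1
    have h3 : (t : ℝ) * (g c : ℝ) ≤ (E.card : ℝ) * (f c : ℝ) := by linarith
    exact_mod_cast h3
  have hE' : t.choose 2 < E.card := by rw [hEcard]; exact hE
  have hn' : Fintype.card V = w + t := by omega
  have hcond := cond_of_density color f g E t w hnd hn' ht hE' hgcnt hgf'
  obtain ⟨S, hSE, hScard, hScomp, hScnt⟩ :=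
    main_exchange color E.card E ∅ f t rfl (Finset.disjoint_empty_right E) (by
      intro A hA
      rw [Finset.union_empty, ncomp_empty_eq trivial]
      exact hcond A hA)
  rw [Finset.union_empty, ncomp_empty_eq trivial] at hScomp
  -- hScomp : Fintype.card V = ncomp S + t
  have hndS : ∀ e ∈ S, ¬ e.IsDiag := fun e he => hnd e (hSE he)
  set F : SimpleGraph V := SimpleGraph.fromEdgeSet (S : Set (Sym2 V)) with hFdef
  have hFedge : F.edgeSet = (S : Set (Sym2 V)) := by
    rw [hFdef, SimpleGraph.edgeSet_fromEdgeSet]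
    ext e
    simp only [Set.mem_diff, Set.mem_setOf_eq, Finset.mem_coe, and_iff_left_iff_imp]
    exact fun he => hndS e he
  have hreach : ∀ (T : Finset (Sym2 V)) (u v : V),
      (SimpleGraph.fromEdgeSet (T : Set (Sym2 V))).Reachable u v ↔ creach T u v :=
    fun T u v => fromEdgeSet_reachable_iff T u v
  refine ⟨F, ?_, ?_, ?_, ?_⟩
  · -- F ≤ G
    intro u v huv
    rw [hFdef, SimpleGraph.fromEdgeSet_adj] at huv
    exact (SimpleGraph.mem_edgeSet G).mp ((hmemE _).mp (hSE huv.1))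
  · -- acyclic
    rw [SimpleGraph.isAcyclic_iff_forall_edge_isBridge]
    intro e he
    rw [hFedge, Finset.mem_coe] at he
    revert he
    induction e using Sym2.ind with
    | _ x y =>
    intro he
    have hxy : x ≠ y := by
      intro h
      exact hndS _ he (by rw [h]; exact Sym2.mk_isDiag_iff.mpr rfl)
    rw [SimpleGraph.isBridge_iff]
    refine (fun h : F.Adj x y ∧ ¬(F.deleteEdges {s(x, y)}).Reachable x y => h.2) ⟨?_, ?_⟩
    · rw [hFdef, SimpleGraph.fromEdgeSet_adj]
      exact ⟨he, hxy⟩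
    · intro hreach'
      have hFD : F \ SimpleGraph.fromEdgeSet {s(x,y)} =
          SimpleGraph.fromEdgeSet ((S.erase s(x,y) : Finset (Sym2 V)) : Set (Sym2 V)) := by
        ext u v
        rw [SimpleGraph.sdiff_adj, hFdef, SimpleGraph.fromEdgeSet_adj,
          SimpleGraph.fromEdgeSet_adj, SimpleGraph.fromEdgeSet_adj]
        simp only [Set.mem_singleton_iff, Finset.mem_coe, Finset.mem_erase]
        tauto
      unfold SimpleGraph.deleteEdges at hreach'
      rw [hFD, hreach] at hreach'
      have h1 : ncomp S = ncomp (S.erase s(x,y)) := by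
        conv_lhs => rw [← Finset.insert_erase he]
        exact ncomp_insert_of_reach hreach'
      have h2 : Fintype.card V ≤ ncomp (S.erase s(x,y)) + (S.erase s(x,y)).card := by
        have h3 := ncomp_le_union_add_card (∅ : Finset (Sym2 V)) (S.erase s(x,y))
        rw [Finset.empty_union, ncomp_empty_eq trivial] at h3
        exact h3
      rw [Finset.card_erase_of_mem he] at h2
      have hS1 : 1 ≤ S.card := Finset.card_pos.mpr ⟨_, he⟩
      omega
  · -- component count
    have e1 : F.ConnectedComponent ≃ Quotient (csetoid S) :=
      Quot.congrRight (fun a b => hreach S a b)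
    have : Nat.card F.ConnectedComponent = ncomp S := Nat.card_congr e1
    omega
  · -- colors
    intro c
    have hs : {e ∈ F.edgeSet | color e = c} =
        ↑(S.filter (fun e => color e = c)) := by
      rw [hFedge]
      ext e
      simp only [Set.mem_setOf_eq, Finset.coe_filter, Finset.mem_coe]
    rw [hs, Set.ncard_coe_finset]
    exact hScnt c
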